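/- arXiv:1608.00635 — 2 statements merged into one kernel-verified Lean document; each statement's English description precedes it below -/
import Mathlib

section
/- Let n, v be positive integers, let A be a real n×n Hurwitz matrix (every eigenvalue of A, viewed as a complex matrix, has strictly negative real part), and let B be a real n×v matrix. Then the matrix-valued function t ↦ exp(tA) · B · Bᵀ · exp(tAᵀ) is integrable on [0, ∞) (entrywise), so that the controllability gramian W = ∫₀^∞ exp(tA) B Bᵀ exp(tAᵀ) dt is a well-defined real n×n matrix. -/
open MeasureTheory NormedSpace Matrix
open scoped NNReal ENNReal

section Aux

attribute [local instance] Matrix.linftyOpNormedRing Matrix.linftyOpNormedAlgebra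

variable {n : ℕ}

private theorem gramian_entry_le (M : Matrix (Fin n) (Fin n) ℂ) (i j : Fin n) :
    ‖M i j‖ ≤ ‖M‖ := by
  have h : ‖M i j‖₊ ≤ ‖M‖₊ := by
    rw [Matrix.linfty_opNNNorm_def]
    calc ‖M i j‖₊ ≤ ∑ k, ‖M i k‖₊ :=
          Finset.single_le_sum (f := fun k => ‖M i k‖₊) (fun k _ => zero_le) (Finset.mem_univ j)
      _ ≤ _ := Finset.le_sup (f := fun i => ∑ k, ‖M i k‖₊) (Finset.mem_univ i)
  exact_mod_cast h

private theorem gramian_pow_mulVec (M : Matrix (Fin n) (Fin n) ℂ) (c : ℂ) (x : Fin n → ℂ)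
    (h : M *ᵥ x = c • x) (k : ℕ) : (M ^ k) *ᵥ x = c ^ k • x := by
  induction k with
  | zero => simp
  | succ k ih =>
    rw [pow_succ', pow_succ', ← Matrix.mulVec_mulVec, ih, Matrix.mulVec_smul, h,
      smul_smul, mul_comm]

private theorem gramian_exp_mulVec (M : Matrix (Fin n) (Fin n) ℂ) (c : ℂ) (x : Fin n → ℂ)
    (h : M *ᵥ x = c • x) : exp M *ᵥ x = Complex.exp c • x := by
  classical
  let L : Matrix (Fin n) (Fin n) ℂ →ₗ[ℂ] (Fin n → ℂ) :=
    { toFun := fun N => N *ᵥ x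
      map_add' := fun a b => Matrix.add_mulVec a b x
      map_smul' := fun c a => Matrix.smul_mulVec c a x }
  have hL : Continuous L := L.continuous_of_finiteDimensional
  have hsum : HasSum (fun k : ℕ => ((k.factorial : ℂ))⁻¹ • M ^ k) (exp M) := by
    rw [exp_eq_tsum (𝕂 := ℂ)]
    exact (expSeries_summable' (𝕂 := ℂ) M).hasSum
  have h2 : HasSum (fun k : ℕ => L (((k.factorial : ℂ))⁻¹ • M ^ k)) (L (exp M)) :=
    hsum.map L hL
  have h3 : ∀ k : ℕ, L (((k.factorial : ℂ))⁻¹ • M ^ k) = (((k.factorial : ℂ))⁻¹ * c ^ k) • x := by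
    intro k
    simp only [L, LinearMap.coe_mk, AddHom.coe_mk, _root_.map_smul]
    rw [gramian_pow_mulVec M c x h k, smul_smul]
  rw [funext h3] at h2
  have h4 : HasSum (fun k : ℕ => ((k.factorial : ℂ))⁻¹ * c ^ k) (Complex.exp c) := by
    have h5 : HasSum (fun k : ℕ => ((k.factorial : ℂ))⁻¹ • c ^ k) (exp c) := by
      rw [exp_eq_tsum (𝕂 := ℂ)]
      exact (expSeries_summable' (𝕂 := ℂ) c).hasSum
    rw [Complex.exp_eq_exp_ℂ]
    simpa [smul_eq_mul] using h5
  have := h4.smul_const x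
  exact (h2.unique this) ▸ rfl

private theorem gramian_exp_spec (M : Matrix (Fin n) (Fin n) ℂ) (μ : ℂ)
    (hμ : μ ∈ spectrum ℂ (exp M)) : ∃ l ∈ spectrum ℂ M, μ = Complex.exp l := by
  classical
  rw [spectrum.mem_iff, Matrix.isUnit_iff_isUnit_det, isUnit_iff_ne_zero, not_not] at hμ
  obtain ⟨x, hx0, hx⟩ := (Matrix.exists_mulVec_eq_zero_iff.2 hμ)
  set N := algebraMap ℂ (Matrix (Fin n) (Fin n) ℂ) μ - exp M with hN
  set E := LinearMap.ker N.mulVecLin with hE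
  have hxE : x ∈ E := by simpa [hE] using hx
  have hinv : ∀ y ∈ E, M.mulVecLin y ∈ E := by
    intro y hy
    have hc : N * M = M * N := by
      have hcomm : Commute M (exp M) := (Commute.refl M).exp_right
      simp only [hN, mul_sub, sub_mul, Algebra.commutes, hcomm.eq]
    simp only [hE, LinearMap.mem_ker, mulVecLin_apply] at hy ⊢
    rw [Matrix.mulVec_mulVec, hc, ← Matrix.mulVec_mulVec, hy, Matrix.mulVec_zero]
  have hEnt : Nontrivial E := Submodule.nontrivial_iff_ne_bot.2 (by
    intro hbot
    exact hx0 (by simpa [hbot, Submodule.mem_bot] using hxE))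
  let g : E →ₗ[ℂ] E := (M.mulVecLin).restrict hinv
  obtain ⟨c, hc⟩ := Module.End.exists_eigenvalue g
  obtain ⟨⟨y, hyE⟩, hy⟩ := hc.exists_hasEigenvector
  have hy0 : y ≠ 0 := fun h0 => hy.right (by simpa [Subtype.ext_iff] using h0)
  have hMy : M *ᵥ y = c • y := by
    have := hy.apply_eq_smul
    have h2 := congrArg (Subtype.val) this
    simpa [g, LinearMap.restrict_apply] using h2
  refine ⟨c, ?_, ?_⟩
  · rw [spectrum.mem_iff, Matrix.isUnit_iff_isUnit_det, isUnit_iff_ne_zero, not_not,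
      ← Matrix.exists_mulVec_eq_zero_iff]
    refine ⟨y, hy0, ?_⟩
    have halg : algebraMap ℂ (Matrix (Fin n) (Fin n) ℂ) c *ᵥ y = c • y := by
      rw [Matrix.algebraMap_eq_diagonal]
      ext i
      simp [Matrix.mulVec, diagonal_dotProduct]
    rw [Matrix.sub_mulVec, hMy, halg, sub_self]
  · have h1 : exp M *ᵥ y = Complex.exp c • y := gramian_exp_mulVec M c y hMy
    have h2 : N *ᵥ y = 0 := hyE
    have halg : algebraMap ℂ (Matrix (Fin n) (Fin n) ℂ) μ *ᵥ y = μ • y := by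
      rw [Matrix.algebraMap_eq_diagonal]
      ext i
      simp [Matrix.mulVec, diagonal_dotProduct]
    rw [hN, Matrix.sub_mulVec, h1, halg, sub_eq_zero] at h2
    have := congrFun h2
    obtain ⟨i, hi⟩ := Function.ne_iff.1 hy0
    have := this i
    simp only [Pi.smul_apply, smul_eq_mul] at this
    exact mul_right_cancel₀ hi this

private theorem gramian_exp_decay (hn : 0 < n) (M : Matrix (Fin n) (Fin n) ℂ)
    (hM : ∀ μ ∈ spectrum ℂ M, μ.re < 0) :
    ∃ C ε : ℝ, 0 < ε ∧ ∀ t : ℝ, 0 ≤ t → ‖exp (t • M)‖ ≤ C * Real.exp (-ε * t) := by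
  classical
  haveI : Nonempty (Fin n) := ⟨⟨0, hn⟩⟩
  set a := exp M with ha
  have hne : (spectrum ℂ a).Nonempty := spectrum.nonempty a
  have hrad : spectralRadius ℂ a < (1 : ℝ≥0) := by
    apply spectrum.spectralRadius_lt_of_forall_lt_of_nonempty hne
    intro μ hμ
    obtain ⟨l, hl, rfl⟩ := gramian_exp_spec M μ hμ
    have : ‖Complex.exp l‖ < 1 := by
      rw [Complex.norm_exp]
      exact Real.exp_lt_one_iff.2 (hM l hl)
    exact_mod_cast this
  have hrad' : spectralRadius ℂ a < 1 := by simpa using hrad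
  have hG := spectrum.pow_nnnorm_pow_one_div_tendsto_nhds_spectralRadius a
  have hev : ∀ᶠ k : ℕ in Filter.atTop, ((‖a ^ k‖₊ : ℝ≥0∞) ^ (1 / (k : ℝ)) < 1) :=
    hG.eventually_lt_const hrad'
  obtain ⟨k, hk1, hklt⟩ := (Filter.eventually_ge_atTop 1).and hev |>.exists
  have hk0 : (0 : ℝ) < k := by exact_mod_cast hk1
  have hq1 : ‖a ^ k‖ < 1 := by
    by_contra h
    push_neg at h
    have h1 : (1 : ℝ≥0∞) ≤ (‖a ^ k‖₊ : ℝ≥0∞) := by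
      rw [ENNReal.one_le_coe_iff]
      exact_mod_cast h
    have := ENNReal.rpow_le_rpow h1 (by positivity : (0:ℝ) ≤ 1 / (k:ℝ))
    rw [ENNReal.one_rpow] at this
    exact absurd (lt_of_le_of_lt this hklt) (lt_irrefl _)
  have hq0 : 0 < ‖a ^ k‖ := by
    rw [norm_pos_iff]
    exact ((NormedSpace.isUnit_exp M).pow k).ne_zero
  set q := ‖a ^ k‖ with hqdef
  -- sup of norm on [0,k]
  have hcont : Continuous fun s : ℝ => exp (s • M) :=
    exp_continuous.comp (continuous_id.smul continuous_const)
  obtain ⟨C₀, hC₀⟩ := (isCompact_Icc (a := (0:ℝ)) (b := k)).exists_bound_of_continuousOn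
    hcont.continuousOn
  refine ⟨C₀ / q, -Real.log q / k,
    div_pos (neg_pos.2 (Real.log_neg hq0 hq1)) hk0, ?_⟩
  intro t ht
  set m := ⌊t / k⌋₊ with hm
  have hdiv0 : 0 ≤ t / k := by positivity
  have hmle : (m : ℝ) ≤ t / k := Nat.floor_le hdiv0
  have hltm : t / k < m + 1 := Nat.lt_floor_add_one _
  set s := t - k * m with hs
  have hs0 : 0 ≤ s := by
    rw [hs, sub_nonneg, mul_comm]
    exact (le_div_iff₀ hk0).1 hmle
  have hsk : s ≤ k := by
    rw [hs, sub_le_iff_le_add]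
    have := (div_lt_iff₀ hk0).1 hltm
    nlinarith [this]
  have hsplit : t • M = ((k * m : ℕ) : ℝ) • M + s • M := by
    rw [← add_smul]
    congr 1
    push_cast
    ring
  have hcomm : Commute (((k * m : ℕ) : ℝ) • M) (s • M) :=
    ((Commute.refl M).smul_left _).smul_right _
  have hexp : exp (t • M) = (a ^ k) ^ m * exp (s • M) := by
    rw [hsplit, Matrix.exp_add_of_commute _ _ hcomm, Nat.cast_smul_eq_nsmul ℝ, Matrix.exp_nsmul, ← pow_mul, ha]
  have hb1 : ‖(a ^ k) ^ m‖ ≤ q ^ m := by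
    rcases Nat.eq_zero_or_pos m with h0 | h0
    · simp [h0]
    · exact norm_pow_le' _ h0
  have hb2 : ‖exp (s • M)‖ ≤ C₀ := hC₀ _ ⟨hs0, hsk⟩
  have hC₀0 : (0:ℝ) ≤ C₀ := le_trans (norm_nonneg _) (hC₀ 0 ⟨le_refl _, le_of_lt hk0⟩)
  calc ‖exp (t • M)‖ ≤ ‖(a ^ k) ^ m‖ * ‖exp (s • M)‖ := hexp ▸ norm_mul_le _ _
    _ ≤ q ^ m * C₀ := mul_le_mul hb1 hb2 (norm_nonneg _) (by positivity)
    _ ≤ (C₀ / q) * Real.exp (-(-Real.log q / k) * t) := by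
        have hqm : q ^ m ≤ Real.exp (-(-Real.log q / k) * t) / q := by
          calc q ^ m = q ^ ((m : ℝ)) := (Real.rpow_natCast q m).symm
            _ ≤ q ^ (t / k - 1) :=
                Real.rpow_le_rpow_of_exponent_ge hq0 hq1.le (by linarith)
            _ = Real.exp (Real.log q * (t / k - 1)) := Real.rpow_def_of_pos hq0 _
            _ = Real.exp (-(-Real.log q / k) * t) * Real.exp (-Real.log q) := by
                rw [← Real.exp_add]
                congr 1
                field_simp
                ring
            _ = Real.exp (-(-Real.log q / k) * t) / q := by
                rw [Real.exp_neg, Real.exp_log hq0, ← div_eq_mul_inv]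
        calc q ^ m * C₀ ≤ (Real.exp (-(-Real.log q / k) * t) / q) * C₀ :=
              mul_le_mul_of_nonneg_right hqm hC₀0
          _ = (C₀ / q) * Real.exp (-(-Real.log q / k) * t) := by ring


private theorem gramian_expcont {n : ℕ} (A : Matrix (Fin n) (Fin n) ℝ) :
    Continuous fun t : ℝ => exp (t • A) :=
  exp_continuous.comp (continuous_id.smul continuous_const)

private theorem gramian_mapexp {n : ℕ} (A : Matrix (Fin n) (Fin n) ℝ) (t : ℝ) :
    (exp (t • A)).map (Complex.ofReal ·) = exp (t • A.map (Complex.ofReal ·)) := by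
  have hf : Continuous (Complex.ofRealAm.mapMatrix (m := Fin n) : Matrix (Fin n) (Fin n) ℝ →ₐ[ℝ] Matrix (Fin n) (Fin n) ℂ) := by
    apply continuous_pi
    intro i
    apply continuous_pi
    intro j
    exact Complex.continuous_ofReal.comp ((continuous_apply j).comp (continuous_apply i))
  have h := map_exp (Complex.ofRealAm.mapMatrix (m := Fin n) : Matrix (Fin n) (Fin n) ℝ →ₐ[ℝ] Matrix (Fin n) (Fin n) ℂ) hf (t • A)
  rw [_root_.map_smul, AlgHom.mapMatrix_apply, AlgHom.mapMatrix_apply] at h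
  rw [Complex.ofRealAm_coe] at h
  exact h

private theorem gramian_real_decay (hn : 0 < n) (A : Matrix (Fin n) (Fin n) ℝ)
    (hA : ∀ μ ∈ spectrum ℂ (A.map (Complex.ofReal ·)), μ.re < 0) :
    ∃ C ε : ℝ, 0 < ε ∧ 0 ≤ C ∧
      ∀ t : ℝ, 0 ≤ t → ∀ i j : Fin n, |exp (t • A) i j| ≤ C * Real.exp (-ε * t) := by
  obtain ⟨C, ε, hε, hC⟩ := gramian_exp_decay hn (A.map (Complex.ofReal ·)) hA
  have hC0 : 0 ≤ C := by
    have h0 := hC 0 le_rfl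
    have h1 : (0:ℝ) ≤ ‖exp ((0:ℝ) • A.map (Complex.ofReal ·))‖ := norm_nonneg _
    have h2 : Real.exp (-ε * 0) = 1 := by norm_num
    nlinarith
  refine ⟨C, ε, hε, hC0, ?_⟩
  intro t ht i j
  have h1 : |exp (t • A) i j| = ‖(exp (t • A.map (Complex.ofReal ·))) i j‖ := by
    rw [← gramian_mapexp A t]
    simp [Matrix.map_apply, Complex.norm_real]
  rw [h1]
  exact le_trans (gramian_entry_le _ i j) (hC t ht)

end Aux

/-- If `A` is a real `n × n` Hurwitz matrix (every eigenvalue of `A`,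
viewed as a complex matrix, has strictly negative real part) and `B` is a real `n × v`
matrix, then `t ↦ exp (t A) * B * Bᵀ * exp (t Aᵀ)` is (entrywise) integrable on `[0, ∞)`,
so the controllability gramian `W = ∫₀^∞ exp (t A) B Bᵀ exp (t Aᵀ) dt` is well defined. -/
theorem gramian_integrable
    (n v : ℕ) (hn : 0 < n) (hv : 0 < v)
    (A : Matrix (Fin n) (Fin n) ℝ)
    (hA : ∀ μ ∈ spectrum ℂ (A.map (Complex.ofReal ·)), μ.re < 0)
    (B : Matrix (Fin n) (Fin v) ℝ) :
    ∀ i j : Fin n,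
      IntegrableOn
        (fun t : ℝ => (exp (t • A) * B * Bᵀ * exp (t • Aᵀ)) i j)
        (Set.Ici (0 : ℝ)) := by
  intro i j
  obtain ⟨C, ε, hε, hC0, hC⟩ := gramian_real_decay hn A hA
  set Q : Matrix (Fin n) (Fin n) ℝ := B * Bᵀ with hQ
  set S : ℝ := ∑ a : Fin n, ∑ b : Fin n, |Q a b| with hS
  have hS0 : 0 ≤ S := Finset.sum_nonneg fun a _ => Finset.sum_nonneg fun b _ => abs_nonneg _
  have hTr : ∀ t : ℝ, exp (t • Aᵀ) = (exp (t • A))ᵀ := by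
    intro t
    rw [← Matrix.transpose_smul, Matrix.exp_transpose]
  -- continuity
  have hcont : Continuous fun t : ℝ =>
      (exp (t • A) * B * Bᵀ * exp (t • Aᵀ)) i j := by
    have h1 : Continuous fun t : ℝ => exp (t • A) := gramian_expcont A
    have h2 : Continuous fun t : ℝ => exp (t • Aᵀ) := gramian_expcont Aᵀ
    have h3 : Continuous fun t : ℝ => exp (t • A) * B * Bᵀ * exp (t • Aᵀ) :=
      ((h1.matrix_mul continuous_const).matrix_mul continuous_const).matrix_mul h2
    exact (continuous_apply j).comp ((continuous_apply i).comp h3)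
  refine Integrable.mono' (g := fun t : ℝ => (C * C * S) * Real.exp (-(2 * ε) * t))
    ?_ (hcont.aestronglyMeasurable.restrict) ?_
  · exact (integrableOn_Ici_iff_integrableOn_Ioi).2
      ((exp_neg_integrableOn_Ioi 0 (by positivity : (0:ℝ) < 2 * ε)).const_mul _)
  · rw [ae_restrict_iff' measurableSet_Ici]
    refine ae_of_all _ fun t ht => ?_
    have hentry : ∀ a b : Fin n, |exp (t • A) a b| ≤ C * Real.exp (-ε * t) := hC t ht
    have hexpand : (exp (t • A) * B * Bᵀ * exp (t • Aᵀ)) i j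
        = ∑ b : Fin n, (∑ a : Fin n, exp (t • A) i a * Q a b) * exp (t • A) j b := by
      rw [hTr, Matrix.mul_assoc (exp (t • A)) B Bᵀ, ← hQ, Matrix.mul_apply]
      refine Finset.sum_congr rfl fun b _ => ?_
      rw [Matrix.mul_apply, Matrix.transpose_apply]
    rw [Real.norm_eq_abs, hexpand]
    have hbd : ∀ b : Fin n, |(∑ a : Fin n, exp (t • A) i a * Q a b) * exp (t • A) j b|
        ≤ (∑ a : Fin n, (C * Real.exp (-ε * t)) * |Q a b|) * (C * Real.exp (-ε * t)) := by
      intro b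
      rw [abs_mul]
      refine mul_le_mul ?_ (hentry j b) (abs_nonneg _)
        (Finset.sum_nonneg fun a _ => by positivity)
      refine le_trans (Finset.abs_sum_le_sum_abs _ _) (Finset.sum_le_sum fun a _ => ?_)
      rw [abs_mul]
      exact mul_le_mul_of_nonneg_right (hentry i a) (abs_nonneg _)
    calc |∑ b : Fin n, (∑ a : Fin n, exp (t • A) i a * Q a b) * exp (t • A) j b|
        ≤ ∑ b : Fin n, |(∑ a : Fin n, exp (t • A) i a * Q a b) * exp (t • A) j b| :=
          Finset.abs_sum_le_sum_abs _ _
      _ ≤ ∑ b : Fin n, (∑ a : Fin n, (C * Real.exp (-ε * t)) * |Q a b|)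
            * (C * Real.exp (-ε * t)) := Finset.sum_le_sum fun b _ => hbd b
      _ = (C * Real.exp (-ε * t)) * (C * Real.exp (-ε * t)) * S := by
          simp only [Finset.sum_mul, Finset.mul_sum, hS]
          rw [Finset.sum_comm]
          exact Finset.sum_congr rfl fun a _ => Finset.sum_congr rfl fun b _ => by ring
      _ = (C * C * S) * (Real.exp (-ε * t) * Real.exp (-ε * t)) := by ring
      _ = (C * C * S) * Real.exp (-(2 * ε) * t) := by
          rw [← Real.exp_add]
          congr 1
          ring
end

section
/- Let n, v, r, s be positive integers, let A be a real n×n Hurwitz matrix (every eigenvalue of A, viewed as a complex matrix, has strictly negative real part), and let B be a real n×v matrix. Let T₁, …, T_r be real v×v orthogonal matrices (T_lᵀT_l = I_v), let c₁, …, c_s be positive reals, and let e₁, …, e_v be the standard unit vectors of ℝ^v. For each i ∈ {1,…,v}, l ∈ {1,…,r}, m ∈ {1,…,s}, define the trajectory x^{ilm}(t) = c_m · exp(tA) · B · T_l · e_i (the impulse response of the system ẋ = Ax + Bu started at the zero steady state x₀ = 0 under the input u(t) = c_m T_l e_i δ(t)). Then the empirical controllability covariance W = Σᵢ₌₁^v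 Σₗ₌₁^r Σₘ₌₁^s (1/(r·s·c_m²)) ∫₀^∞ x^{ilm}(t) · x^{ilm}(t)ᵀ dt equals the controllability gramian ∫₀^∞ exp(tA) B Bᵀ exp(tAᵀ) dt. -/
open MeasureTheory NormedSpace Matrix
open scoped Nat ENNReal NNReal

attribute [local instance] Matrix.linftyOpNormedAddCommGroup Matrix.linftyOpNormedSpace
  Matrix.linftyOpNormedRing Matrix.linftyOpNormedAlgebra

theorem aux_exp_mulVec_eigen {N : ℕ} (M : Matrix (Fin N) (Fin N) ℂ) (w : Fin N → ℂ) (lam : ℂ)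
    (hw : M *ᵥ w = lam • w) : exp M *ᵥ w = Complex.exp lam • w := by
  have hpow : ∀ k : ℕ, M ^ k *ᵥ w = lam ^ k • w := by
    intro k; induction k with
    | zero => simp
    | succ k ih =>
      rw [pow_succ, pow_succ, ← Matrix.mulVec_mulVec, hw, Matrix.mulVec_smul, ih, smul_smul,
        mul_comm]
  let L0 : Matrix (Fin N) (Fin N) ℂ →ₗ[ℂ] (Fin N → ℂ) :=
    { toFun := fun X => X *ᵥ w
      map_add' := fun X Y => Matrix.add_mulVec X Y w
      map_smul' := fun a X => Matrix.smul_mulVec a X w }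
  let L := LinearMap.toContinuousLinearMap L0
  have hsum : Summable fun k : ℕ => (k ! : ℂ)⁻¹ • M ^ k := expSeries_summable' (𝕂 := ℂ) M
  have h1 : exp M *ᵥ w = ∑' k : ℕ, (k ! : ℂ)⁻¹ • (M ^ k *ᵥ w) := by
    have h2 : L (∑' k : ℕ, (k ! : ℂ)⁻¹ • M ^ k) = ∑' k : ℕ, L ((k ! : ℂ)⁻¹ • M ^ k) :=
      L.map_tsum hsum
    simpa [L, L0, exp_eq_tsum ℂ, Matrix.smul_mulVec] using h2
  have hsuml : Summable fun k : ℕ => (k ! : ℂ)⁻¹ • lam ^ k := expSeries_summable' (𝕂 := ℂ) lam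
  calc exp M *ᵥ w = ∑' k : ℕ, ((k ! : ℂ)⁻¹ • lam ^ k) • w := by
        rw [h1]; congr 1; ext k; rw [hpow k, smul_smul]; rw [smul_eq_mul]
    _ = (∑' k : ℕ, (k ! : ℂ)⁻¹ • lam ^ k) • w := by rw [hsuml.tsum_smul_const]
    _ = Complex.exp lam • w := by
        rw [Complex.exp_eq_exp_ℂ, exp_eq_tsum ℂ]

theorem aux_spectrum_exp {N : ℕ} (M : Matrix (Fin N) (Fin N) ℂ) (μ : ℂ)
    (hμ : μ ∈ spectrum ℂ (exp M)) : ∃ lam ∈ spectrum ℂ M, μ = Complex.exp lam := by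
  set f : Module.End ℂ (Fin N → ℂ) := Matrix.toLinAlgEquiv' M with hf
  set g : Module.End ℂ (Fin N → ℂ) := Matrix.toLinAlgEquiv' (exp M) with hgdef
  have hg : μ ∈ spectrum ℂ g := by rw [hgdef, AlgEquiv.spectrum_eq]; exact hμ
  have hge : g.HasEigenvalue μ := Module.End.HasEigenvalue.of_mem_spectrum hg
  set E : Submodule ℂ (Fin N → ℂ) := g.eigenspace μ with hE
  have hEne : E ≠ ⊥ := hge
  haveI : Nontrivial E := Submodule.nontrivial_iff_ne_bot.mpr hEne
  have hcomm : M * exp M = exp M * M := ((Commute.refl M).exp_right).eq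
  have hgf : g * f = f * g := by
    rw [hf, hgdef, ← _root_.map_mul, ← _root_.map_mul, hcomm]
  have hinv : ∀ u ∈ E, f u ∈ E := by
    intro u hu
    have hu' : g u = μ • u := Module.End.mem_eigenspace_iff.mp hu
    have : g (f u) = μ • f u := by
      have hfg : g (f u) = f (g u) := by
        rw [← Module.End.mul_apply, hgf, Module.End.mul_apply]
      rw [hfg, hu', _root_.map_smul]
    exact Module.End.mem_eigenspace_iff.mpr this
  let fE : Module.End ℂ E := f.restrict hinv
  obtain ⟨lam, hlam⟩ := Module.End.exists_eigenvalue fE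
  obtain ⟨⟨w, hwE⟩, hwev⟩ := hlam.exists_hasEigenvector
  have hw0 : w ≠ 0 := fun h => hwev.right (by simp [h])
  have hfw : f w = lam • w := by
    have := Module.End.mem_eigenspace_iff.mp hwev.left
    exact congrArg Subtype.val this
  have hMw : M *ᵥ w = lam • w := by
    simpa [hf, Matrix.toLinAlgEquiv'_apply] using hfw
  have hlamspec : lam ∈ spectrum ℂ M := by
    rw [← AlgEquiv.spectrum_eq Matrix.toLinAlgEquiv' M,
      ← Module.End.hasEigenvalue_iff_mem_spectrum]
    exact Module.End.hasEigenvalue_of_hasEigenvector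
      ⟨Module.End.mem_eigenspace_iff.mpr hfw, hw0⟩
  refine ⟨lam, hlamspec, ?_⟩
  have h1 : exp M *ᵥ w = Complex.exp lam • w := aux_exp_mulVec_eigen M w lam hMw
  have h2 : exp M *ᵥ w = μ • w := by
    have := Module.End.mem_eigenspace_iff.mp hwE
    simpa [hgdef, Matrix.toLinAlgEquiv'_apply] using this
  rw [h1] at h2
  have hz : (μ - Complex.exp lam) • w = 0 := by rw [sub_smul, ← h2, sub_self]
  rcases smul_eq_zero.mp hz with h | h
  · exact (sub_eq_zero.mp h)
  · exact absurd h hw0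

theorem aux_norm_map {N : ℕ} (X : Matrix (Fin N) (Fin N) ℝ) :
    ‖X.map (Complex.ofReal ·)‖ = ‖X‖ := by
  rw [← coe_nnnorm, ← coe_nnnorm]
  congr 1
  rw [Matrix.linfty_opNNNorm_def, Matrix.linfty_opNNNorm_def]
  congr 1; ext i; congr 1; ext j
  simp [Matrix.map_apply, Complex.nnnorm_real]

theorem aux_map_exp {N : ℕ} (X : Matrix (Fin N) (Fin N) ℝ) :
    (exp X).map (Complex.ofReal ·) = exp (X.map (Complex.ofReal ·)) := by
  have hlin : Continuous (fun Y : Matrix (Fin N) (Fin N) ℝ => Y.map (Complex.ofReal ·)) := by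
    let L : Matrix (Fin N) (Fin N) ℝ →ₗ[ℝ] Matrix (Fin N) (Fin N) ℂ :=
      { toFun := fun Y => Y.map (Complex.ofReal ·)
        map_add' := fun X Y => by ext i j; simp [Matrix.map_apply]
        map_smul' := fun a X => by ext i j; simp [Matrix.map_apply, Complex.real_smul] }
    exact L.continuous_of_finiteDimensional
  have h1 : (Complex.ofRealHom.mapMatrix : Matrix (Fin N) (Fin N) ℝ →+* _) (exp X)
      = exp (Complex.ofRealHom.mapMatrix X) :=
    map_exp Complex.ofRealHom.mapMatrix hlin X
  have h2 : (exp : Matrix (Fin N) (Fin N) ℂ → _) = exp := rfl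
  calc (exp X).map (Complex.ofReal ·) = Complex.ofRealHom.mapMatrix (exp X) := rfl
    _ = exp (Complex.ofRealHom.mapMatrix X) := h1
    _ = exp (X.map (Complex.ofReal ·)) := rfl

theorem aux_exists_pow_lt {N : ℕ} (A : Matrix (Fin N) (Fin N) ℝ)
    (hA : ∀ μ ∈ spectrum ℂ (A.map (Complex.ofReal ·)), μ.re < 0) :
    ∃ k : ℕ, 0 < k ∧ ‖exp ((k : ℝ) • A)‖ < 1 := by
  set M : Matrix (Fin N) (Fin N) ℂ := A.map (Complex.ofReal ·) with hM
  -- all spectrum elements of exp M have nnnorm < 1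
  have hspec : ∀ μ ∈ spectrum ℂ (exp M), ‖μ‖₊ < 1 := by
    intro μ hμ
    obtain ⟨lam, hlam, rfl⟩ := aux_spectrum_exp M μ hμ
    have : ‖Complex.exp lam‖ = Real.exp lam.re := Complex.norm_exp lam
    have hlt : Real.exp lam.re < 1 := Real.exp_lt_one_iff.mpr (hA lam hlam)
    rw [← NNReal.coe_lt_coe]
    simpa [coe_nnnorm, this] using hlt
  have hrad : spectralRadius ℂ (exp M) < 1 := by
    have hfin := Matrix.finite_spectrum (R := ℂ) (exp M)
    set S := hfin.toFinset with hS
    have hθ : S.sup (fun μ => ‖μ‖₊) < 1 := by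
      rw [Finset.sup_lt_iff (by norm_num : (⊥ : NNReal) < 1)]
      intro μ hμ
      exact hspec μ (hfin.mem_toFinset.mp hμ)
    have hle : spectralRadius ℂ (exp M) ≤ ((S.sup fun μ => ‖μ‖₊ : NNReal) : ℝ≥0∞) :=
      iSup₂_le fun μ hμ =>
        by exact_mod_cast Finset.le_sup (f := fun μ => ‖μ‖₊) (hfin.mem_toFinset.mpr hμ)
    exact lt_of_le_of_lt hle (by exact_mod_cast hθ)
  have htend := spectrum.pow_nnnorm_pow_one_div_tendsto_nhds_spectralRadius (exp M)
  have hev := (htend.eventually_lt_const hrad).and (Filter.eventually_ge_atTop 1)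
  obtain ⟨k, hklt, hk1⟩ := hev.exists
  refine ⟨k, hk1, ?_⟩
  have hkpos : (0 : ℝ) < 1 / k := by positivity
  have hnn : ‖(exp M) ^ k‖₊ < 1 := by
    by_contra h
    push_neg at h
    have : (1 : ℝ≥0∞) ≤ ((‖(exp M) ^ k‖₊ : ℝ≥0∞)) ^ (1 / (k : ℝ)) := by
      calc (1 : ℝ≥0∞) = 1 ^ (1 / (k : ℝ)) := (ENNReal.one_rpow _).symm
        _ ≤ _ := ENNReal.rpow_le_rpow (by exact_mod_cast h) hkpos.le
    exact absurd hklt (not_lt.mpr this)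
  have htrans : ‖exp ((k : ℝ) • A)‖ = ‖(exp M) ^ k‖ := by
    have h1 : ((k : ℝ) • A).map (Complex.ofReal ·) = (k : ℝ) • M := by
      ext i j; simp [hM, Matrix.map_apply, Complex.real_smul]
    rw [← aux_norm_map, aux_map_exp, h1]
    have h2 : (k : ℝ) • M = k • M := by rw [Nat.cast_smul_eq_nsmul]
    rw [h2, Matrix.exp_nsmul]
  rw [htrans]
  exact_mod_cast hnn

theorem aux_decay {N : ℕ} (A : Matrix (Fin N) (Fin N) ℝ)
    (hA : ∀ μ ∈ spectrum ℂ (A.map (Complex.ofReal ·)), μ.re < 0) :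
    ∃ C ε : ℝ, 0 < C ∧ 0 < ε ∧ ∀ t : ℝ, 0 ≤ t →
      ‖exp (t • A)‖ ≤ C * Real.exp (-ε * t) := by
  obtain ⟨k, hk, hρ0⟩ := aux_exists_pow_lt A hA
  have hkR : (0:ℝ) < k := by exact_mod_cast hk
  set ρ : ℝ := max ‖exp ((k:ℝ) • A)‖ (1/2) with hρdef
  have hρpos : 0 < ρ := lt_of_lt_of_le (by norm_num) (le_max_right _ _)
  have hρ1 : ρ < 1 := max_lt hρ0 (by norm_num)
  have hbase : ‖exp ((k:ℝ) • A)‖ ≤ ρ := le_max_left _ _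
  have hcont : Continuous fun t : ℝ => exp (t • A) :=
    exp_continuous.comp (continuous_id.smul continuous_const)
  obtain ⟨C₀, hC₀⟩ := (isCompact_Icc (a := (0:ℝ)) (b := (k:ℝ))).exists_bound_of_continuousOn
    hcont.continuousOn
  set C : ℝ := max C₀ 1 with hC
  have hCpos : 0 < C := lt_of_lt_of_le one_pos (le_max_right _ _)
  have hCb : ∀ u ∈ Set.Icc (0:ℝ) (k:ℝ), ‖exp (u • A)‖ ≤ C :=
    fun u hu => (hC₀ u hu).trans (le_max_left _ _)
  have key : ∀ j : ℕ, ∀ u ∈ Set.Icc (0:ℝ) (k:ℝ), ‖exp ((u + k * j) • A)‖ ≤ C * ρ ^ j := by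
    intro j
    induction j with
    | zero => intro u hu; simpa using hCb u hu
    | succ j ih =>
      intro u hu
      have hsplit : (u + (k:ℝ) * ((j:ℕ)+1 : ℕ)) • A = (u + (k:ℝ) * j) • A + (k:ℝ) • A := by
        rw [← add_smul]; congr 1; push_cast; ring
      have hcomm : Commute ((u + (k:ℝ) * (j:ℕ)) • A) ((k:ℝ) • A) :=
        ((Commute.refl A).smul_left _).smul_right _
      rw [hsplit, Matrix.exp_add_of_commute _ _ hcomm]
      calc ‖exp ((u + (k:ℝ) * j) • A) * exp ((k:ℝ) • A)‖
          ≤ ‖exp ((u + (k:ℝ) * j) • A)‖ * ‖exp ((k:ℝ) • A)‖ := norm_mul_le _ _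
        _ ≤ (C * ρ ^ j) * ρ := by
            apply mul_le_mul (ih u hu) hbase (norm_nonneg _)
            positivity
        _ = C * ρ ^ (j+1) := by ring
  set ε : ℝ := -Real.log ρ / k with hε
  have hlogneg : Real.log ρ < 0 := Real.log_neg hρpos hρ1
  have hεpos : 0 < ε := by
    rw [hε]; apply div_pos (by linarith) hkR
  refine ⟨C * ρ⁻¹, ε, by positivity, hεpos, ?_⟩
  intro t ht
  set j : ℕ := ⌊t / k⌋₊ with hj
  set u : ℝ := t - k * j with hu
  have hjle : (j : ℝ) ≤ t / k := Nat.floor_le (by positivity)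
  have hjlt : t / k < j + 1 := Nat.lt_floor_add_one _
  have hu0 : 0 ≤ u := by
    rw [hu]
    have : (k:ℝ) * j ≤ t := by
      rw [mul_comm]
      exact (le_div_iff₀ hkR).mp hjle
    linarith
  have huk : u ≤ k := by
    rw [hu]
    have : t < (k:ℝ) * (j + 1) := by
      rw [mul_comm]
      exact (div_lt_iff₀ hkR).mp hjlt

    nlinarith
  have ht' : t = u + k * j := by rw [hu]; ring
  have h1 : ‖exp (t • A)‖ ≤ C * ρ ^ j := by
    rw [ht']; exact key j u ⟨hu0, huk⟩
  have h2 : ρ ^ j ≤ ρ⁻¹ * Real.exp (-ε * t) := by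
    have hρj : ρ ^ j = Real.exp ((j : ℝ) * Real.log ρ) := by
      rw [Real.exp_nat_mul, Real.exp_log hρpos]
    have hjge : t / k - 1 ≤ (j : ℝ) := by linarith
    have hmono : (j : ℝ) * Real.log ρ ≤ (t / k - 1) * Real.log ρ :=
      mul_le_mul_of_nonpos_right hjge hlogneg.le
    have heq : (t / k - 1) * Real.log ρ = -ε * t + (-Real.log ρ) := by
      rw [hε]; field_simp; ring
    calc ρ ^ j = Real.exp ((j : ℝ) * Real.log ρ) := hρj
      _ ≤ Real.exp ((t / k - 1) * Real.log ρ) := Real.exp_le_exp.mpr hmono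
      _ = Real.exp (-Real.log ρ) * Real.exp (-ε * t) := by
          rw [heq, Real.exp_add]; ring
      _ = ρ⁻¹ * Real.exp (-ε * t) := by rw [Real.exp_neg, Real.exp_log hρpos]
  calc ‖exp (t • A)‖ ≤ C * ρ ^ j := h1
    _ ≤ C * (ρ⁻¹ * Real.exp (-ε * t)) := by
        exact mul_le_mul_of_nonneg_left h2 hCpos.le
    _ = C * ρ⁻¹ * Real.exp (-ε * t) := by ring

theorem aux_entry_le {a b : ℕ} (X : Matrix (Fin a) (Fin b) ℝ) (p : Fin a) (q : Fin b) :
    |X p q| ≤ ‖X‖ := by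
  rw [← Real.norm_eq_abs, ← coe_nnnorm, ← coe_nnnorm, NNReal.coe_le_coe]
  calc ‖X p q‖₊ ≤ ∑ j, ‖X p j‖₊ :=
        Finset.single_le_sum (f := fun j => ‖X p j‖₊) (fun _ _ => zero_le)
          (Finset.mem_univ q)
    _ ≤ Finset.univ.sup fun i => ∑ j, ‖X i j‖₊ :=
        Finset.le_sup (f := fun i => ∑ j, ‖X i j‖₊) (Finset.mem_univ p)
    _ = ‖X‖₊ := (Matrix.linfty_opNNNorm_def X).symm

theorem aux_cont_entry {a b d : ℕ} (D : Matrix (Fin b) (Fin d) ℝ) (p : Fin a) (q : Fin d) :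
    Continuous (fun X : Matrix (Fin a) (Fin b) ℝ => (X * D) p q) := by
  let L : Matrix (Fin a) (Fin b) ℝ →ₗ[ℝ] ℝ :=
    { toFun := fun X => (X * D) p q
      map_add' := fun X Y => by simp [Matrix.add_mul]
      map_smul' := fun t X => by simp [Matrix.smul_mul] }
  exact L.continuous_of_finiteDimensional

theorem aux_integrable {n v : ℕ} (A : Matrix (Fin n) (Fin n) ℝ)
    (C ε : ℝ) (hC : 0 < C) (hε : 0 < ε)
    (hdecay : ∀ t : ℝ, 0 ≤ t → ‖exp (t • A)‖ ≤ C * Real.exp (-ε * t))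
    (D : Matrix (Fin n) (Fin v) ℝ) (p q : Fin n) (i : Fin v) :
    MeasureTheory.IntegrableOn
      (fun t : ℝ => (exp (t • A) * D) p i * (exp (t • A) * D) q i)
      (Set.Ici (0:ℝ)) := by
  have hcont : Continuous fun t : ℝ => exp (t • A) :=
    exp_continuous.comp (continuous_id.smul continuous_const)
  have hcg : Continuous (fun t : ℝ => (exp (t • A) * D) p i * (exp (t • A) * D) q i) :=
    ((aux_cont_entry D p i).comp hcont).mul ((aux_cont_entry D q i).comp hcont)
  have hdom : MeasureTheory.IntegrableOn
      (fun t : ℝ => (C * ‖D‖) ^ 2 * Real.exp (-(2 * ε) * t)) (Set.Ici (0:ℝ)) := by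
    exact ((integrableOn_Ici_iff_integrableOn_Ioi).mpr
      (exp_neg_integrableOn_Ioi 0 (by positivity))).const_mul _
  refine hdom.mono' (hcg.aestronglyMeasurable.restrict) ?_
  rw [MeasureTheory.ae_restrict_iff' measurableSet_Ici]
  refine MeasureTheory.ae_of_all _ fun t ht => ?_
  have hFD : ‖exp (t • A) * D‖ ≤ C * Real.exp (-ε * t) * ‖D‖ :=
    (Matrix.linfty_opNorm_mul _ _).trans
      (mul_le_mul_of_nonneg_right (hdecay t ht) (norm_nonneg _))
  have hent : ∀ a : Fin n, |(exp (t • A) * D) a i| ≤ C * Real.exp (-ε * t) * ‖D‖ :=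
    fun a => (aux_entry_le _ a i).trans hFD
  have habs : ‖(exp (t • A) * D) p i * (exp (t • A) * D) q i‖
      ≤ (C * Real.exp (-ε * t) * ‖D‖) * (C * Real.exp (-ε * t) * ‖D‖) := by
    rw [Real.norm_eq_abs, abs_mul]
    exact mul_le_mul (hent p) (hent q) (abs_nonneg _) (by positivity)
  refine habs.trans (le_of_eq ?_)
  have : Real.exp (-(2 * ε) * t) = Real.exp (-ε * t) * Real.exp (-ε * t) := by
    rw [← Real.exp_add]; ring_nf
  rw [this]; ring

/-- For a stable linear system `ẋ = A x + B u` (with `A` Hurwitz), the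
empirical controllability covariance computed from the impulse-response trajectories
`x^{ilm}(t) = c_m · exp (t A) · B · T_l · e_i` (orthogonal excitation directions `T_l`,
excitation sizes `c_m > 0`, standard unit vectors `e_i`) equals the controllability
gramian `∫₀^∞ exp (t A) B Bᵀ exp (t Aᵀ) dt` (entrywise). -/
theorem ecc_eq_gramian
    (n v r s : ℕ) (hn : 0 < n) (hv : 0 < v) (hr : 0 < r) (hs : 0 < s)
    (A : Matrix (Fin n) (Fin n) ℝ)
    (hA : ∀ μ ∈ spectrum ℂ (A.map (Complex.ofReal ·)), μ.re < 0)
    (B : Matrix (Fin n) (Fin v) ℝ)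
    (T : Fin r → Matrix (Fin v) (Fin v) ℝ)
    (hT : ∀ l, (T l)ᵀ * T l = 1)
    (c : Fin s → ℝ) (hc : ∀ m, 0 < c m)
    -- the impulse-response trajectories, with rest point `x₀ = 0`
    (x : Fin v → Fin r → Fin s → ℝ → (Fin n → ℝ))
    (hx : ∀ (i : Fin v) (l : Fin r) (m : Fin s) (t : ℝ),
      x i l m t = c m • ((NormedSpace.exp (t • A) * B * T l) *ᵥ Pi.single i 1)) :
    ∀ p q : Fin n,
      (∑ i : Fin v, ∑ l : Fin r, ∑ m : Fin s,
          (1 / ((r : ℝ) * (s : ℝ) * (c m) ^ 2)) *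
            ∫ t in Set.Ici (0 : ℝ), vecMulVec (x i l m t) (x i l m t) p q)
        = ∫ t in Set.Ici (0 : ℝ), (NormedSpace.exp (t • A) * B * Bᵀ * NormedSpace.exp (t • Aᵀ)) p q := by
  intro p q
  obtain ⟨C, ε, hC, hε, hdecay⟩ := aux_decay A hA
  have hrne : (r : ℝ) ≠ 0 := Nat.cast_ne_zero.mpr hr.ne'
  have hsne : (s : ℝ) ≠ 0 := Nat.cast_ne_zero.mpr hs.ne'
  have hTT : ∀ l, T l * (T l)ᵀ = 1 := fun l => mul_eq_one_comm.mp (hT l)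
  set I : ℝ := ∫ t in Set.Ici (0:ℝ), (exp (t • A) * B * Bᵀ * exp (t • Aᵀ)) p q with hI
  have hint : ∀ (l : Fin r) (i : Fin v),
      MeasureTheory.IntegrableOn
        (fun t : ℝ => (exp (t • A) * B * T l) p i * (exp (t • A) * B * T l) q i)
        (Set.Ici (0:ℝ)) := by
    intro l i
    have := aux_integrable A C ε hC hε hdecay (B * T l) p q i
    simpa [Matrix.mul_assoc] using this
  have hptwise : ∀ (l : Fin r) (t : ℝ),
      (∑ i : Fin v, (exp (t • A) * B * T l) p i * (exp (t • A) * B * T l) q i)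
        = (exp (t • A) * B * Bᵀ * exp (t • Aᵀ)) p q := by
    intro l t
    have hXT : exp (t • Aᵀ) = (exp (t • A))ᵀ := by
      rw [← Matrix.transpose_smul, Matrix.exp_transpose]
    set X := exp (t • A) with hXdef
    set M := X * B * T l with hM
    have h1 : (∑ i : Fin v, M p i * M q i) = (M * Mᵀ) p q := by
      rw [Matrix.mul_apply]
      simp only [Matrix.transpose_apply]
    rw [h1, hXT, hM]
    have h2 : X * B * T l * (X * B * T l)ᵀ = X * B * Bᵀ * Xᵀ := by
      rw [Matrix.transpose_mul, Matrix.transpose_mul]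
      simp only [Matrix.mul_assoc]
      rw [← Matrix.mul_assoc (T l) (T l)ᵀ (Bᵀ * Xᵀ), hTT l, Matrix.one_mul]
    rw [h2]
  have hIl : ∀ l : Fin r,
      (∑ i : Fin v, ∫ t in Set.Ici (0:ℝ),
        (exp (t • A) * B * T l) p i * (exp (t • A) * B * T l) q i) = I := by
    intro l
    rw [← MeasureTheory.integral_finset_sum _ (fun i _ => hint l i), hI]
    congr 1
    funext t
    exact hptwise l t
  have hterm : ∀ (i : Fin v) (l : Fin r) (m : Fin s),
      (1 / ((r : ℝ) * (s : ℝ) * (c m) ^ 2)) *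
          ∫ t in Set.Ici (0 : ℝ), vecMulVec (x i l m t) (x i l m t) p q
        = (1 / ((r : ℝ) * (s : ℝ))) * ∫ t in Set.Ici (0:ℝ),
            (exp (t • A) * B * T l) p i * (exp (t • A) * B * T l) q i := by
    intro i l m
    have hcm : (c m) ≠ 0 := (hc m).ne'
    have h1 : (fun t : ℝ => vecMulVec (x i l m t) (x i l m t) p q)
        = fun t : ℝ => (c m)^2 *
            ((exp (t • A) * B * T l) p i * (exp (t • A) * B * T l) q i) := by
      funext t
      rw [hx i l m t, Matrix.vecMulVec_apply]
      simp only [Pi.smul_apply, smul_eq_mul, Matrix.mulVec_single_one, Matrix.col, Matrix.transpose_apply, mul_one]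
      ring
    rw [h1, MeasureTheory.integral_const_mul, ← mul_assoc]
    congr 1
    field_simp
  simp_rw [hterm]
  have hm2 : ∀ (i : Fin v) (l : Fin r), (∑ _m : Fin s, (1 / ((r : ℝ) * (s : ℝ))) *
      ∫ t in Set.Ici (0:ℝ), (exp (t • A) * B * T l) p i * (exp (t • A) * B * T l) q i)
      = (1 / (r : ℝ)) * ∫ t in Set.Ici (0:ℝ),
          (exp (t • A) * B * T l) p i * (exp (t • A) * B * T l) q i := by
    intro i l
    rw [Finset.sum_const, Finset.card_univ, Fintype.card_fin, nsmul_eq_mul]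
    field_simp
  simp_rw [hm2]
  rw [Finset.sum_comm]
  have hl2 : ∀ l : Fin r, (∑ i : Fin v, (1 / (r:ℝ)) * ∫ t in Set.Ici (0:ℝ),
      (exp (t • A) * B * T l) p i * (exp (t • A) * B * T l) q i)
      = (1 / (r:ℝ)) * I := by
    intro l
    rw [← Finset.mul_sum, hIl l]
  simp_rw [hl2]
  rw [Finset.sum_const, Finset.card_univ, Fintype.card_fin, nsmul_eq_mul]
  field_simp
end
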